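/- Let p ∈ (1,∞), set Υ_p := ( ∫_ℝ (1+ξ²)^{−p/2} dξ )^{−1}, and for ε > 0 define the probability density δ_ε(E) := Υ_p ε^{p−1} (E² + ε²)^{−p/2} on ℝ. Let f : ℝ → ℂ be continuously differentiable with compact support and let (δ_ε * f)(E) := ∫_ℝ δ_ε(E − E') f(E') dE'. Then there exists a function C : (0,1] → [0,∞) with lim_{ε↓0} C(ε) = 0 such that |f(E) − (δ_ε * f)(E)| ≤ C(ε) · δ_1(E) for all E ∈ ℝ and all ε ∈ (0,1]. -/

import Mathlib

open Real MeasureTheory Filter Topology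

lemma kernel_integrable {p : ℝ} (hp : 1 < p) {ε : ℝ} (hε : 0 < ε) :
    Integrable (fun t : ℝ => (t ^ 2 + ε ^ 2) ^ (-(p / 2))) := by
  have hm : 0 < min (ε ^ 2) 1 / 2 := by positivity
  have hcont : Continuous fun t : ℝ => (t ^ 2 + ε ^ 2) ^ (-(p / 2)) := by
    apply Continuous.rpow_const (by continuity)
    intro x; exact Or.inl (by positivity)
  refine ((integrable_one_add_norm (E := ℝ) (r := p) (by simpa using hp)).const_mul
    ((min (ε ^ 2) 1 / 2) ^ (-(p / 2)))).mono' hcont.aestronglyMeasurable (ae_of_all _ fun t => ?_)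
  rw [Real.norm_of_nonneg (by positivity)]
  have h1 : min (ε ^ 2) 1 / 2 * (1 + ‖t‖) ^ (2:ℕ) ≤ t ^ 2 + ε ^ 2 := by
    have h2 : (min (ε ^ 2) 1) * (1 + t ^ 2) ≤ t ^ 2 + ε ^ 2 := by
      rcases min_le_iff.mpr (Or.inl (le_refl (ε^2))) with _
      have hm1 : min (ε ^ 2) 1 ≤ 1 := min_le_right _ _
      have hm2 : min (ε ^ 2) 1 ≤ ε ^ 2 := min_le_left _ _
      nlinarith [sq_nonneg t, hm.le]
    have h3 : (1 + ‖t‖) ^ (2:ℕ) ≤ 2 * (1 + t ^ 2) := by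
      have := abs_nonneg t
      simp only [Real.norm_eq_abs]
      nlinarith [sq_abs t, sq_nonneg (1 - |t|)]
    nlinarith [hm.le, sq_nonneg (1 + ‖t‖)]
  calc (t ^ 2 + ε ^ 2) ^ (-(p / 2))
      ≤ (min (ε ^ 2) 1 / 2 * (1 + ‖t‖) ^ (2:ℕ)) ^ (-(p / 2)) := by
        apply Real.rpow_le_rpow_of_nonpos (by positivity) h1 (by linarith)
    _ = (min (ε ^ 2) 1 / 2) ^ (-(p / 2)) * (1 + ‖t‖) ^ (-p) := by
        rw [Real.mul_rpow (by positivity) (by positivity), ← Real.rpow_natCast (1 + ‖t‖) 2,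
          ← Real.rpow_mul (by positivity)]
        norm_num; ring_nf; tauto

lemma kernel_integral_eq {p : ℝ} {ε : ℝ} (hε : 0 < ε) :
    ∫ t : ℝ, (t ^ 2 + ε ^ 2) ^ (-(p / 2))
      = ε ^ (1 - p) * ∫ ξ : ℝ, (1 + ξ ^ 2) ^ (-(p / 2)) := by
  have key : ∀ t : ℝ, (t ^ 2 + ε ^ 2) ^ (-(p / 2))
      = ε ^ (-p) * (1 + (ε⁻¹ * t) ^ 2) ^ (-(p / 2)) := by
    intro t
    have hb : (1 : ℝ) + (ε⁻¹ * t) ^ 2 = (t ^ 2 + ε ^ 2) * (ε ^ 2)⁻¹ := by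
      field_simp; ring
    rw [hb, Real.mul_rpow (by positivity) (by positivity)]
    have h2 : ((ε ^ 2)⁻¹ : ℝ) ^ (-(p / 2)) = ε ^ p := by
      rw [← Real.rpow_natCast ε 2, ← Real.rpow_neg_one (ε ^ ((2:ℕ):ℝ)),
        ← Real.rpow_mul hε.le, ← Real.rpow_mul hε.le]
      norm_num
      congr 1; ring
    rw [h2, mul_comm ((t ^ 2 + ε ^ 2) ^ (-(p / 2))) , ← mul_assoc, ← Real.rpow_add hε]
    simp
  rw [integral_congr_ae (ae_of_all _ key), MeasureTheory.integral_const_mul,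
    Measure.integral_comp_inv_mul_left (fun ξ : ℝ => (1 + ξ ^ 2) ^ (-(p / 2))) ε,
    abs_of_pos hε, smul_eq_mul, ← mul_assoc]
  congr 1
  rw [mul_comm, show (1 : ℝ) - p = 1 + -p by ring, Real.rpow_add hε, Real.rpow_one]

lemma kernel_even {p ε : ℝ} : ∀ t : ℝ, ((-t) ^ 2 + ε ^ 2) ^ (-(p / 2)) = (t ^ 2 + ε ^ 2) ^ (-(p / 2)) := by
  intro t; rw [neg_pow]; norm_num

lemma tail_Ioi {p ε c : ℝ} (hp : 1 < p) (hε : 0 < ε) (hc : 0 < c) :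
    ∫ t in Set.Ioi c, (t ^ 2 + ε ^ 2) ^ (-(p / 2)) ≤ c ^ (1 - p) / (p - 1) := by
  have hval := integral_Ioi_rpow_of_lt (a := -p) (by linarith) hc
  have hmono : ∫ t in Set.Ioi c, (t ^ 2 + ε ^ 2) ^ (-(p / 2)) ≤ ∫ t in Set.Ioi c, t ^ (-p) := by
    refine setIntegral_mono_on (kernel_integrable hp hε).integrableOn
      (integrableOn_Ioi_rpow_of_lt (by linarith) hc) measurableSet_Ioi fun t ht => ?_
    have ht' : 0 < t := hc.trans ht
    calc (t ^ 2 + ε ^ 2) ^ (-(p / 2)) ≤ (t ^ 2) ^ (-(p / 2)) :=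
          Real.rpow_le_rpow_of_nonpos (by positivity) (by nlinarith) (by linarith)
      _ = t ^ (-p) := by
          rw [← Real.rpow_natCast t 2, ← Real.rpow_mul ht'.le]; norm_num; congr 1; ring
  refine hmono.trans ?_
  rw [hval, show -p + 1 = -(p - 1) by ring, show (1:ℝ) - p = -(p - 1) by ring,
    show (p:ℝ) - 1 = -(-(p-1)) by ring, neg_div_neg_eq]

lemma tail_compl {p ε c : ℝ} (hp : 1 < p) (hε : 0 < ε) (hc : 0 < c) :
    ∫ t in {t : ℝ | |t| ≤ c}ᶜ, (t ^ 2 + ε ^ 2) ^ (-(p / 2)) ≤ 2 * (c ^ (1 - p) / (p - 1)) := by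
  have hint := kernel_integrable hp hε
  have hnn : ∀ t : ℝ, 0 ≤ (t ^ 2 + ε ^ 2) ^ (-(p / 2)) := fun t => Real.rpow_nonneg (by positivity) _
  have hsub : {t : ℝ | |t| ≤ c}ᶜ ⊆ Set.Iic (-c) ∪ Set.Ioi c := by
    intro t ht
    simp only [Set.mem_compl_iff, Set.mem_setOf_eq, abs_le, not_and_or, not_le] at ht
    rcases ht with h | h
    · exact Or.inl (by simpa using h.le)
    · exact Or.inr h
  have heven : ∫ t in Set.Iic (-c), (t ^ 2 + ε ^ 2) ^ (-(p / 2))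
      = ∫ t in Set.Ioi c, (t ^ 2 + ε ^ 2) ^ (-(p / 2)) := by
    have h2 := integral_comp_neg_Iic (-c) (fun t : ℝ => (t ^ 2 + ε ^ 2) ^ (-(p / 2)))
    simp only [neg_sq, neg_neg] at h2
    simpa using h2
  calc ∫ t in {t : ℝ | |t| ≤ c}ᶜ, (t ^ 2 + ε ^ 2) ^ (-(p / 2))
      ≤ ∫ t in Set.Iic (-c) ∪ Set.Ioi c, (t ^ 2 + ε ^ 2) ^ (-(p / 2)) :=
        setIntegral_mono_set hint.integrableOn (ae_of_all _ hnn)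
          (HasSubset.Subset.eventuallyLE hsub)
    _ = (∫ t in Set.Iic (-c), (t ^ 2 + ε ^ 2) ^ (-(p / 2)))
        + ∫ t in Set.Ioi c, (t ^ 2 + ε ^ 2) ^ (-(p / 2)) :=
        setIntegral_union (Set.Iic_disjoint_Ioi (by linarith)) measurableSet_Ioi
          hint.integrableOn hint.integrableOn
    _ ≤ 2 * (c ^ (1 - p) / (p - 1)) := by
        rw [heven]; have := tail_Ioi (ε := ε) hp hε hc; linarith


set_option maxHeartbeats 1000000 in
/-- for the approximate delta family
`δ_ε(E) = Υ_p ε^{p-1} (E² + ε²)^{-p/2}` and `f ∈ C¹_0(ℝ)` there is `C(ε) → 0` as `ε ↓ 0`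
with `|f(E) - (δ_ε * f)(E)| ≤ C(ε) δ_1(E)` for all `E` and all `ε ∈ (0,1]`. -/
theorem stmt11 (p : ℝ) (hp : 1 < p) (Υ : ℝ)
    (hΥ : Υ = (∫ ξ : ℝ, (1 + ξ ^ 2) ^ (-(p / 2)))⁻¹)
    (δ : ℝ → ℝ → ℝ)
    (hδ : ∀ ε E, δ ε E = Υ * ε ^ (p - 1) * (E ^ 2 + ε ^ 2) ^ (-(p / 2)))
    (f : ℝ → ℂ) (hf : ContDiff ℝ 1 f) (hsupp : HasCompactSupport f) :
    ∃ C : ℝ → ℝ, (∀ ε ∈ Set.Ioc (0 : ℝ) 1, 0 ≤ C ε) ∧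
      Tendsto C (𝓝[>] (0 : ℝ)) (𝓝 0) ∧
      ∀ ε ∈ Set.Ioc (0 : ℝ) 1, ∀ E : ℝ,
        ‖f E - ∫ E' : ℝ, (δ ε (E - E') : ℂ) * f E'‖ ≤ C ε * δ 1 E := by
  -- constants
  obtain ⟨K, hK⟩ := ContDiff.lipschitzWith_of_hasCompactSupport hsupp hf one_ne_zero
  obtain ⟨M, hM⟩ := hf.continuous.bounded_above_of_compact_support hsupp
  have hM0 : 0 ≤ M := le_trans (norm_nonneg _) (hM 0)
  obtain ⟨R₀, hR₀⟩ := hsupp.isBounded.subset_closedBall 0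
  set R : ℝ := max R₀ 1 with hRdef
  have hR1 : 1 ≤ R := le_max_right _ _
  have hfR : ∀ x : ℝ, R < |x| → f x = 0 := by
    intro x hx
    apply image_eq_zero_of_notMem_tsupport
    intro hmem
    have h1 := hR₀ hmem
    simp only [Metric.mem_closedBall, Real.dist_eq, sub_zero] at h1
    have := le_max_left R₀ 1
    linarith
  set I := ∫ ξ : ℝ, (1 + ξ ^ 2) ^ (-(p / 2)) with hIdef
  have hIker : I = ∫ ξ : ℝ, (ξ ^ 2 + 1 ^ 2) ^ (-(p / 2)) := by
    rw [hIdef]; congr 1; ext ξ; norm_num [add_comm]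
  have hIpos : 0 < I := by
    rw [hIker]
    refine (integral_pos_iff_support_of_nonneg
      (fun ξ => Real.rpow_nonneg (by positivity) _) (kernel_integrable hp one_pos)).mpr ?_
    have : Function.support (fun ξ : ℝ => (ξ ^ 2 + 1 ^ 2) ^ (-(p / 2))) = Set.univ := by
      ext ξ; simp only [Function.mem_support, Set.mem_univ, iff_true]
      exact (Real.rpow_pos_of_pos (by positivity) _).ne'
    rw [this]
    simp
  have hΥpos : 0 < Υ := by rw [hΥ]; exact inv_pos.mpr hIpos
  have hΥI : Υ * I = 1 := by rw [hΥ]; exact inv_mul_cancel₀ hIpos.ne'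
  have hδnn : ∀ ε E, 0 < ε → 0 ≤ δ ε E := by
    intro ε E hε; rw [hδ]
    have := Real.rpow_nonneg (show (0:ℝ) ≤ E ^ 2 + ε ^ 2 by positivity) (-(p/2))
    have := Real.rpow_nonneg hε.le (p - 1)
    positivity
  have hδint : ∀ ε : ℝ, 0 < ε → Integrable (δ ε) := by
    intro ε hε
    have : δ ε = fun E => Υ * ε ^ (p - 1) * (E ^ 2 + ε ^ 2) ^ (-(p / 2)) := funext (hδ ε)
    rw [this]
    exact (kernel_integrable hp hε).const_mul _
  have hδone : ∀ ε : ℝ, 0 < ε → ∫ t : ℝ, δ ε t = 1 := by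
    intro ε hε
    simp only [hδ]
    rw [MeasureTheory.integral_const_mul, kernel_integral_eq hε, ← hIdef]
    have h1 : ε ^ (p - 1) * ε ^ (1 - p) = 1 := by
      rw [← Real.rpow_add hε]; norm_num
    calc Υ * ε ^ (p - 1) * (ε ^ (1 - p) * I)
        = Υ * I * (ε ^ (p - 1) * ε ^ (1 - p)) := by ring
      _ = 1 := by rw [h1, hΥI, mul_one]
  set If := ∫ x : ℝ, ‖f x‖ with hIfdef
  have hIf0 : 0 ≤ If := integral_nonneg fun x => norm_nonneg _
  have hfint : Integrable f := hf.continuous.integrable_of_hasCompactSupport hsupp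
  set c₀ : ℝ := Υ * (4 * R ^ 2 + 1) ^ (-(p / 2)) with hc₀def
  have hc₀pos : 0 < c₀ := by
    have := Real.rpow_pos_of_pos (show (0:ℝ) < 4 * R ^ 2 + 1 by positivity) (-(p/2))
    positivity
  have hδ1nn : ∀ E : ℝ, 0 ≤ δ 1 E := fun E => hδnn 1 E one_pos
  have hp1 : 0 < p - 1 := by linarith
  refine ⟨fun ε => c₀⁻¹ * ((K : ℝ) * Real.sqrt ε
      + 2 * M * (2 * Υ / (p - 1) * ε ^ ((p - 1) / 2)))
      + 8 ^ (p / 2) * If * ε ^ (p - 1), ?_, ?_, ?_⟩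
  · rintro ε ⟨hε0, -⟩
    have h1 : (0:ℝ) ≤ Real.sqrt ε := Real.sqrt_nonneg _
    have h2 : (0:ℝ) ≤ ε ^ ((p - 1) / 2) := Real.rpow_nonneg hε0.le _
    have h3 : (0:ℝ) ≤ ε ^ (p - 1) := Real.rpow_nonneg hε0.le _
    have h5 : (0:ℝ) ≤ (8:ℝ) ^ (p / 2) := Real.rpow_nonneg (by norm_num) _
    have hK0 : (0:ℝ) ≤ (K : ℝ) := K.coe_nonneg
    have h6 : (0:ℝ) ≤ 2 * Υ / (p - 1) := div_nonneg (by linarith) hp1.le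
    refine add_nonneg (mul_nonneg (inv_nonneg.2 hc₀pos.le) (add_nonneg (mul_nonneg hK0 h1)
      (mul_nonneg (by linarith) (mul_nonneg h6 h2)))) (mul_nonneg (mul_nonneg h5 hIf0) h3)
  · have t1 : Tendsto (fun ε : ℝ => Real.sqrt ε) (𝓝[>] 0) (𝓝 0) := by
      have h : Tendsto (fun ε : ℝ => Real.sqrt ε) (𝓝 0) (𝓝 (Real.sqrt 0)) :=
        Real.continuous_sqrt.tendsto 0
      simpa using h.mono_left nhdsWithin_le_nhds
    have t2 : Tendsto (fun ε : ℝ => ε ^ ((p - 1) / 2)) (𝓝[>] 0) (𝓝 0) := by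
      have h : Tendsto (fun ε : ℝ => ε ^ ((p - 1) / 2)) (𝓝 0) (𝓝 ((0:ℝ) ^ ((p - 1) / 2))) :=
        (Real.continuousAt_rpow_const 0 ((p - 1) / 2) (Or.inr (by linarith))).tendsto
      have h' := h.mono_left (nhdsWithin_le_nhds (s := Set.Ioi 0))
      rwa [Real.zero_rpow (by positivity : ((p:ℝ) - 1) / 2 ≠ 0)] at h'
    have t3 : Tendsto (fun ε : ℝ => ε ^ (p - 1)) (𝓝[>] 0) (𝓝 0) := by
      have h : Tendsto (fun ε : ℝ => ε ^ (p - 1)) (𝓝 0) (𝓝 ((0:ℝ) ^ (p - 1))) :=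
        (Real.continuousAt_rpow_const 0 (p - 1) (Or.inr (by linarith))).tendsto
      have h' := h.mono_left (nhdsWithin_le_nhds (s := Set.Ioi 0))
      rwa [Real.zero_rpow hp1.ne'] at h'
    have tmain := (((t1.const_mul ((K : ℝ))).add
        ((t2.const_mul (2 * Υ / (p - 1))).const_mul (2 * M))).const_mul c₀⁻¹).add
      (t3.const_mul (8 ^ (p / 2) * If))
    simpa using tmain
  · rintro ε ⟨hε0, hε1⟩ E
    have hδe := hδint ε hε0
    have int1 : Integrable fun t : ℝ => (δ ε t : ℂ) * f E := hδe.ofReal.mul_const _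
    have int2 : Integrable fun t : ℝ => (δ ε t : ℂ) * f (E - t) := by
      have hmeas : AEStronglyMeasurable (fun t : ℝ => f (E - t)) volume :=
        (hf.continuous.comp (continuous_const.sub continuous_id)).aestronglyMeasurable
      have h := Integrable.bdd_mul hδe.ofReal hmeas (ae_of_all _ fun t => hM _)
      exact h.congr (ae_of_all _ fun t => mul_comm _ _)
    have hconv : ∫ E' : ℝ, (δ ε (E - E') : ℂ) * f E'
        = ∫ t : ℝ, (δ ε t : ℂ) * f (E - t) := by
      have h := integral_sub_left_eq_self (fun t : ℝ => (δ ε t : ℂ) * f (E - t)) volume E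
      simp only [sub_sub_cancel] at h
      exact h
    have hfE : f E = ∫ t : ℝ, (δ ε t : ℂ) * f E := by
      rw [MeasureTheory.integral_mul_const,
        show (∫ a : ℝ, (δ ε a : ℂ)) = ((∫ a : ℝ, δ ε a : ℝ) : ℂ) from integral_ofReal,
        hδone ε hε0]
      simp
    have hdiff : f E - ∫ E' : ℝ, (δ ε (E - E') : ℂ) * f E'
        = ∫ t : ℝ, (δ ε t : ℂ) * (f E - f (E - t)) := by
      rw [hconv]
      calc f E - ∫ t : ℝ, (δ ε t : ℂ) * f (E - t)
          = (∫ t : ℝ, (δ ε t : ℂ) * f E) - ∫ t : ℝ, (δ ε t : ℂ) * f (E - t) := by rw [← hfE]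
        _ = ∫ t : ℝ, ((δ ε t : ℂ) * f E - (δ ε t : ℂ) * f (E - t)) :=
            (integral_sub int1 int2).symm
        _ = ∫ t : ℝ, (δ ε t : ℂ) * (f E - f (E - t)) := by
            congr 1; ext t; ring
    have hnormb : ‖f E - ∫ E' : ℝ, (δ ε (E - E') : ℂ) * f E'‖
        ≤ ∫ t : ℝ, δ ε t * ‖f E - f (E - t)‖ := by
      rw [hdiff]
      refine (norm_integral_le_integral_norm _).trans_eq ?_
      refine integral_congr_ae (ae_of_all _ fun t => ?_)
      show ‖(δ ε t : ℂ) * (f E - f (E - t))‖ = δ ε t * ‖f E - f (E - t)‖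
      rw [norm_mul, Complex.norm_real, Real.norm_of_nonneg (hδnn ε t hε0)]
    rcases le_or_gt |E| (2 * R) with hE | hE
    · -- |E| small
      set c := Real.sqrt ε with hcdef
      have hcpos : 0 < c := Real.sqrt_pos.mpr hε0
      set s : Set ℝ := {t : ℝ | |t| ≤ c} with hsdef
      have hs : MeasurableSet s := by
        have : s = Set.Icc (-c) c := by ext t; simp [hsdef, abs_le]
        rw [this]; exact measurableSet_Icc
      have hΔbdd : ∀ t : ℝ, ‖f E - f (E - t)‖ ≤ 2 * M := fun t =>
        (norm_sub_le _ _).trans (by have := hM E; have := hM (E - t); linarith)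
      have hintprod : Integrable fun t : ℝ => δ ε t * ‖f E - f (E - t)‖ := by
        have hmeas : AEStronglyMeasurable (fun t : ℝ => ‖f E - f (E - t)‖) volume :=
          ((continuous_const.sub (hf.continuous.comp
            (continuous_const.sub continuous_id))).norm).aestronglyMeasurable
        have h := Integrable.bdd_mul hδe hmeas
          (c := 2 * M) (ae_of_all _ fun t => by rw [Real.norm_of_nonneg (norm_nonneg _)]; exact hΔbdd t)
        exact h.congr (ae_of_all _ fun t => mul_comm _ _)
      have hsplit := integral_add_compl hs hintprod
      have hb1 : ∫ t in s, δ ε t * ‖f E - f (E - t)‖ ≤ (K : ℝ) * c := by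
        calc ∫ t in s, δ ε t * ‖f E - f (E - t)‖
            ≤ ∫ t in s, δ ε t * ((K : ℝ) * c) := by
              refine setIntegral_mono_on hintprod.integrableOn
                (hδe.integrableOn.mul_const _) hs fun t ht => ?_
              refine mul_le_mul_of_nonneg_left ?_ (hδnn ε t hε0)
              have h1 : ‖f E - f (E - t)‖ ≤ (K : ℝ) * |t| := by
                have := hK.dist_le_mul E (E - t)
                rw [dist_eq_norm, dist_eq_norm] at this
                simpa using this
              have ht' : |t| ≤ c := ht
              calc ‖f E - f (E - t)‖ ≤ (K : ℝ) * |t| := h1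
                _ ≤ (K : ℝ) * c := mul_le_mul_of_nonneg_left ht' K.coe_nonneg
          _ = (∫ t in s, δ ε t) * ((K : ℝ) * c) := MeasureTheory.integral_mul_const _ _
          _ ≤ 1 * ((K : ℝ) * c) := by
              refine mul_le_mul_of_nonneg_right ?_ (by positivity)
              have h := setIntegral_le_integral (s := s) hδe (ae_of_all _ fun t => hδnn ε t hε0)
              rwa [hδone ε hε0] at h
          _ = (K : ℝ) * c := one_mul _
      have htail : ∫ t in sᶜ, δ ε t ≤ Υ * ε ^ (p - 1) * (2 * (c ^ (1 - p) / (p - 1))) := by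
        have hcong : ∫ t in sᶜ, δ ε t
            = Υ * ε ^ (p - 1) * ∫ t in sᶜ, (t ^ 2 + ε ^ 2) ^ (-(p / 2)) := by
          simp only [hδ]
          exact MeasureTheory.integral_const_mul _ _
        rw [hcong]
        refine mul_le_mul_of_nonneg_left ?_
          (mul_nonneg hΥpos.le (Real.rpow_nonneg hε0.le _))
        exact tail_compl hp hε0 hcpos
      have hb2 : ∫ t in sᶜ, δ ε t * ‖f E - f (E - t)‖
          ≤ 2 * M * (Υ * ε ^ (p - 1) * (2 * (c ^ (1 - p) / (p - 1)))) := by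
        calc ∫ t in sᶜ, δ ε t * ‖f E - f (E - t)‖
            ≤ ∫ t in sᶜ, δ ε t * (2 * M) := by
              refine setIntegral_mono_on hintprod.integrableOn
                (hδe.integrableOn.mul_const _) hs.compl fun t ht => ?_
              exact mul_le_mul_of_nonneg_left (hΔbdd t) (hδnn ε t hε0)
          _ = (∫ t in sᶜ, δ ε t) * (2 * M) := MeasureTheory.integral_mul_const _ _
          _ ≤ (Υ * ε ^ (p - 1) * (2 * (c ^ (1 - p) / (p - 1)))) * (2 * M) :=
              mul_le_mul_of_nonneg_right htail (by linarith)
          _ = 2 * M * (Υ * ε ^ (p - 1) * (2 * (c ^ (1 - p) / (p - 1)))) := by ring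
      have hpow : Υ * ε ^ (p - 1) * (2 * (c ^ (1 - p) / (p - 1)))
          = 2 * Υ / (p - 1) * ε ^ ((p - 1) / 2) := by
        have h1 : c ^ (1 - p) = ε ^ ((1 - p) / 2) := by
          rw [hcdef, Real.sqrt_eq_rpow, ← Real.rpow_mul hε0.le]
          congr 1; ring
        have h2 : ε ^ (p - 1) * ε ^ ((1 - p) / 2) = ε ^ ((p - 1) / 2) := by
          rw [← Real.rpow_add hε0]; congr 1; ring
        rw [h1, show Υ * ε ^ (p - 1) * (2 * (ε ^ ((1 - p) / 2) / (p - 1)))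
          = 2 * Υ / (p - 1) * (ε ^ (p - 1) * ε ^ ((1 - p) / 2)) by ring, h2]
      have hAbound : ‖f E - ∫ E' : ℝ, (δ ε (E - E') : ℂ) * f E'‖
          ≤ (K : ℝ) * Real.sqrt ε + 2 * M * (2 * Υ / (p - 1) * ε ^ ((p - 1) / 2)) := by
        refine hnormb.trans ?_
        rw [← hsplit, ← hcdef]
        rw [hpow] at hb2
        linarith [hb1, hb2]
      have hδ1E : c₀ ≤ δ 1 E := by
        rw [hδ, Real.one_rpow, mul_one, hc₀def, one_pow]
        refine mul_le_mul_of_nonneg_left ?_ hΥpos.le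
        refine Real.rpow_le_rpow_of_nonpos (by positivity) ?_ (by linarith)
        nlinarith [sq_abs E, abs_nonneg E, hE]
      set Aε : ℝ := (K : ℝ) * Real.sqrt ε + 2 * M * (2 * Υ / (p - 1) * ε ^ ((p - 1) / 2))
        with hAdef
      have hA0 : 0 ≤ Aε := by
        have h2 : (0:ℝ) ≤ ε ^ ((p - 1) / 2) := Real.rpow_nonneg hε0.le _
        have h6 : (0:ℝ) ≤ 2 * Υ / (p - 1) := div_nonneg (by linarith) hp1.le
        have := Real.sqrt_nonneg ε
        have := K.coe_nonneg
        positivity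
      have hδ1E0 : 0 ≤ δ 1 E := hδ1nn E
      calc ‖f E - ∫ E' : ℝ, (δ ε (E - E') : ℂ) * f E'‖ ≤ Aε := hAbound
        _ = c₀⁻¹ * Aε * c₀ := by field_simp
        _ ≤ c₀⁻¹ * Aε * δ 1 E :=
            mul_le_mul_of_nonneg_left hδ1E (mul_nonneg (inv_nonneg.2 hc₀pos.le) hA0)
        _ ≤ (c₀⁻¹ * Aε + 8 ^ (p / 2) * If * ε ^ (p - 1)) * δ 1 E := by
            refine mul_le_mul_of_nonneg_right ?_ hδ1E0
            have h3 : (0:ℝ) ≤ ε ^ (p - 1) := Real.rpow_nonneg hε0.le _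
            have h5 : (0:ℝ) ≤ (8:ℝ) ^ (p / 2) := Real.rpow_nonneg (by norm_num) _
            have h7 : (0:ℝ) ≤ 8 ^ (p / 2) * If * ε ^ (p - 1) :=
              mul_nonneg (mul_nonneg h5 hIf0) h3
            linarith
        _ = (c₀⁻¹ * ((K : ℝ) * Real.sqrt ε + 2 * M * (2 * Υ / (p - 1) * ε ^ ((p - 1) / 2)))
            + 8 ^ (p / 2) * If * ε ^ (p - 1)) * δ 1 E := by rw [hAdef]
    · -- |E| large
      have hfE0 : f E = 0 := hfR E (by linarith)
      have hgoal : ‖f E - ∫ E' : ℝ, (δ ε (E - E') : ℂ) * f E'‖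
          = ‖∫ E' : ℝ, (δ ε (E - E') : ℂ) * f E'‖ := by
        rw [hfE0, zero_sub, norm_neg]
      have hbound : ∀ E' : ℝ, ‖(δ ε (E - E') : ℂ) * f E'‖
          ≤ (8 ^ (p / 2) * ε ^ (p - 1) * δ 1 E) * ‖f E'‖ := by
        intro E'
        rw [norm_mul, Complex.norm_real, Real.norm_of_nonneg (hδnn ε _ hε0)]
        by_cases hfE' : f E' = 0
        · simp [hfE']
        · have hE' : |E'| ≤ R := by
            by_contra h
            push_neg at h
            exact hfE' (hfR E' h)
          refine mul_le_mul_of_nonneg_right ?_ (norm_nonneg _)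
          have hgeo : (E ^ 2 + 1) / 8 ≤ (E - E') ^ 2 + ε ^ 2 := by
            have hd : |E| - R ≤ |E - E'| := by
              have := abs_sub_abs_le_abs_sub E E'
              linarith
            have hd0 : (0:ℝ) ≤ |E| - R := by linarith
            have hsq : (|E| - R) ^ 2 ≤ (E - E') ^ 2 := by
              rw [← sq_abs (E - E')]
              exact pow_le_pow_left₀ hd0 hd 2
            have hmid : (E ^ 2 + 1) / 8 ≤ (|E| - R) ^ 2 := by
              nlinarith [sq_abs E, sq_nonneg (|E| - 2 * R),
                mul_nonneg (show (0:ℝ) ≤ |E| - 2 * R by linarith) (show (0:ℝ) ≤ R by linarith)]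
            nlinarith [sq_nonneg ε]
          have h8 : ((E ^ 2 + 1) / 8) ^ (-(p / 2)) = 8 ^ (p / 2) * (E ^ 2 + 1) ^ (-(p / 2)) := by
            rw [Real.div_rpow (by positivity) (by norm_num),
              Real.rpow_neg (show (0:ℝ) ≤ 8 by norm_num) (p / 2), div_inv_eq_mul, mul_comm]
          calc δ ε (E - E')
              = Υ * ε ^ (p - 1) * ((E - E') ^ 2 + ε ^ 2) ^ (-(p / 2)) := hδ ε (E - E')
            _ ≤ Υ * ε ^ (p - 1) * ((E ^ 2 + 1) / 8) ^ (-(p / 2)) := by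
                refine mul_le_mul_of_nonneg_left ?_
                  (mul_nonneg hΥpos.le (Real.rpow_nonneg hε0.le _))
                exact Real.rpow_le_rpow_of_nonpos (by positivity) hgeo (by linarith)
            _ = 8 ^ (p / 2) * ε ^ (p - 1) * (Υ * 1 ^ (p - 1) * (E ^ 2 + 1 ^ 2) ^ (-(p / 2))) := by
                rw [h8, Real.one_rpow, one_pow, mul_one]
                ring
            _ = 8 ^ (p / 2) * ε ^ (p - 1) * δ 1 E := by rw [← hδ 1 E]
      have hstep : ‖∫ E' : ℝ, (δ ε (E - E') : ℂ) * f E'‖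
          ≤ ∫ E' : ℝ, (8 ^ (p / 2) * ε ^ (p - 1) * δ 1 E) * ‖f E'‖ := by
        refine (norm_integral_le_integral_norm _).trans ?_
        exact integral_mono_of_nonneg (ae_of_all _ fun E' => norm_nonneg _)
          (hfint.norm.const_mul _) (ae_of_all _ hbound)
      rw [hgoal]
      refine hstep.trans ?_
      rw [MeasureTheory.integral_const_mul, ← hIfdef]
      have h3 : (0:ℝ) ≤ ε ^ (p - 1) := Real.rpow_nonneg hε0.le _
      have h5 : (0:ℝ) ≤ (8:ℝ) ^ (p / 2) := Real.rpow_nonneg (by norm_num) _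
      have h2 : (0:ℝ) ≤ ε ^ ((p - 1) / 2) := Real.rpow_nonneg hε0.le _
      have h6 : (0:ℝ) ≤ 2 * Υ / (p - 1) := div_nonneg (by linarith) hp1.le
      have hA0 : (0:ℝ) ≤ c₀⁻¹ * ((K : ℝ) * Real.sqrt ε
          + 2 * M * (2 * Υ / (p - 1) * ε ^ ((p - 1) / 2))) := by
        refine mul_nonneg (inv_nonneg.2 hc₀pos.le) (add_nonneg
          (mul_nonneg K.coe_nonneg (Real.sqrt_nonneg _))
          (mul_nonneg (by linarith) (mul_nonneg h6 h2)))
      have heq : 8 ^ (p / 2) * ε ^ (p - 1) * δ 1 E * If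
          = (8 ^ (p / 2) * If * ε ^ (p - 1)) * δ 1 E := by ring
      rw [heq]
      refine mul_le_mul_of_nonneg_right ?_ (hδ1nn E)
      linarith
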